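/- Let N ≥ 1 be an integer, 0 < p < 1, and let μ̄, Δ⁻, Δ⁺, I, α⁺, α⁻ be as defined, with 0 ≤ μ̄ − Δ⁻ and μ̄ + Δ⁺ ≤ N. Define the transition probabilities on I by P(k, k+1) = α⁺(k)/4, P(k, k−1) = α⁻(k)/4, P(k, k) = 1 − α⁺(k)/4 − α⁻(k)/4, and P(j, k) = 0 whenever |j − k| > 1. Then the detailed balance conditions hold with respect to the binomial weights: for all j, k ∈ I, B(j; N, p)·P(j, k) = B(k; N, p)·P(k, j). -/

import Mathlib

/-- Binomial probability mass function `B(k; N, p) = C(N,k)·p^k·(1-p)^(N-k)`. -/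
noncomputable def binomialPMF (N : ℕ) (p : ℝ) (k : ℕ) : ℝ :=
  (N.choose k : ℝ) * p ^ k * (1 - p) ^ (N - k)

/-- The Metropolis acceptance function `α⁺`. -/
noncomputable def alphaPlus (N : ℕ) (p : ℝ) (μbar Δp : ℕ) (k : ℕ) : ℝ :=
  if k < μbar then 1
  else if k < μbar + Δp then ((N : ℝ) - k) / ((k : ℝ) + 1) * (p / (1 - p))
  else 0

/-- The Metropolis acceptance function `α⁻`. -/
noncomputable def alphaMinus (N : ℕ) (p : ℝ) (μbar Δm : ℕ) (k : ℕ) : ℝ :=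
  if μbar < k then 1
  else if μbar - Δm < k then (k : ℝ) / ((N : ℝ) - k + 1) * ((1 - p) / p)
  else 0

/-- The transition probabilities of the Metropolis chain on `I = [μ̄ - Δ⁻, μ̄ + Δ⁺]`:
`P(k, k+1) = α⁺(k)/4`, `P(k, k-1) = α⁻(k)/4`, `P(k, k) = 1 - α⁺(k)/4 - α⁻(k)/4`,
and `P(j, k) = 0` whenever `|j - k| > 1`. -/
noncomputable def metropolisTrans (N : ℕ) (p : ℝ) (μbar Δm Δp : ℕ) (j k : ℕ) : ℝ :=
  if k = j + 1 then alphaPlus N p μbar Δp j / 4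
  else if j = k + 1 then alphaMinus N p μbar Δm j / 4
  else if j = k then 1 - alphaPlus N p μbar Δp j / 4 - alphaMinus N p μbar Δm j / 4
  else 0

lemma binom_step (N : ℕ) (p : ℝ) (hp0 : 0 < p) (hp1 : p < 1) (j : ℕ) (hj : j < N) :
    binomialPMF N p j * (((N : ℝ) - j) / ((j : ℝ) + 1) * (p / (1 - p))) =
      binomialPMF N p (j + 1) := by
  unfold binomialPMF
  have hq : (0 : ℝ) < 1 - p := by linarith
  have hNj : N - j = (N - (j + 1)) + 1 := by omega
  have hc : ((N.choose (j + 1) : ℝ)) * ((j : ℝ) + 1) = (N.choose j : ℝ) * ((N : ℝ) - j) := by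
    have h := Nat.choose_succ_right_eq N j
    have h2 : ((N.choose (j + 1) : ℝ)) * ((j : ℝ) + 1) = (N.choose j : ℝ) * ((N - j : ℕ) : ℝ) := by
      exact_mod_cast congrArg (Nat.cast : ℕ → ℝ) h
    rw [Nat.cast_sub hj.le] at h2
    exact h2
  rw [hNj, pow_succ]
  have hj1 : ((j : ℝ) + 1) ≠ 0 := by positivity
  field_simp
  linear_combination (- p ^ j * p) * hc

lemma balance_step (N : ℕ) (p : ℝ) (hp0 : 0 < p) (hp1 : p < 1)
    (μbar Δm Δp : ℕ) (hΔp : μbar + Δp ≤ N)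
    (j : ℕ) (hj1 : μbar - Δm ≤ j) (hj2 : j + 1 ≤ μbar + Δp) :
    binomialPMF N p j * alphaPlus N p μbar Δp j =
      binomialPMF N p (j + 1) * alphaMinus N p μbar Δm (j + 1) := by
  have hq : (0 : ℝ) < 1 - p := by linarith
  have hjN : j < N := by omega
  have hstep := binom_step N p hp0 hp1 j hjN
  have hcast : ((N : ℝ) - (j + 1) + 1) = (N : ℝ) - j := by push_cast; ring
  have hNj : (0 : ℝ) < (N : ℝ) - j := by
    have : (j : ℝ) < N := by exact_mod_cast hjN
    linarith
  unfold alphaPlus alphaMinus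
  by_cases h1 : j < μbar
  · -- α⁺(j) = 1 ; j+1 ≤ μbar so α⁻(j+1) = ratio
    rw [if_pos h1]
    have h2 : ¬ μbar < j + 1 := by omega
    have h3 : μbar - Δm < j + 1 := by omega
    rw [if_neg h2, if_pos h3]
    rw [← hstep]
    push_cast
    rw [hcast]
    field_simp
  · -- μbar ≤ j, and j < μbar + Δp
    have h1' : j < μbar + Δp := by omega
    rw [if_neg h1, if_pos h1']
    have h2 : μbar < j + 1 := by omega
    rw [if_pos h2, mul_one]
    exact hstep

/-- Detailed balance of the Metropolis chain with respect to the
binomial weights: for all `j, k ∈ I`, `B(j; N, p)·P(j, k) = B(k; N, p)·P(k, j)`. -/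
theorem metropolis_detailed_balance
    (N : ℕ) (hN : 1 ≤ N) (p : ℝ) (hp0 : 0 < p) (hp1 : p < 1)
    (μbar Δm Δp : ℕ)
    (hμbar : μbar =
      if (N : ℝ) * p - ⌊(N : ℝ) * p⌋₊ ≤ 1 - p then ⌊(N : ℝ) * p⌋₊ else ⌈(N : ℝ) * p⌉₊)
    (hΔm : Δm ≤ μbar) (hΔp : μbar + Δp ≤ N) :
    ∀ j k : ℕ, μbar - Δm ≤ j → j ≤ μbar + Δp → μbar - Δm ≤ k → k ≤ μbar + Δp →
      binomialPMF N p j * metropolisTrans N p μbar Δm Δp j k =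
        binomialPMF N p k * metropolisTrans N p μbar Δm Δp k j := by
  intro j k hj1 hj2 hk1 hk2
  unfold metropolisTrans
  by_cases hkj : k = j + 1
  · subst hkj
    have hne : ¬ j = (j + 1) + 1 := by omega
    rw [if_pos rfl, if_neg hne, if_pos rfl]
    have := balance_step N p hp0 hp1 μbar Δm Δp hΔp j hj1 hk2
    linear_combination this / 4
  · by_cases hjk : j = k + 1
    · subst hjk
      rw [if_neg hkj, if_pos rfl, if_pos rfl]
      have := balance_step N p hp0 hp1 μbar Δm Δp hΔp k hk1 hj2
      linear_combination - this / 4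
    · by_cases hjk2 : j = k
      · subst hjk2; rfl
      · have h1 : ¬ k = j + 1 := hkj
        have h2 : ¬ j = k + 1 := hjk
        have h3 : ¬ j = k := hjk2
        have h4 : ¬ k = j := fun h => h3 h.symm
        rw [if_neg h1, if_neg h2, if_neg h3, if_neg h2, if_neg h1, if_neg h4]
        simp
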